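/- Let n and t be positive integers with t ≤ n, let p1, …, pt ∈ ℤ^n, let M1, …, Mt be integers, let r ∈ ℤ^n, and set a = M1·p1 + ⋯ + Mt·pt + r ∈ ℤ^n. Let A be the (n+1)×n integer matrix whose first row is a and whose remaining n rows form the n×n identity matrix. Suppose v1, …, vk ∈ ℤ^n are linearly independent vectors satisfying pi·vj = 0 for all i = 1,…,t and j = 1,…,k. Then the vectors A·v1, …, A·vk are linearly independent elements of the lattice L(A) = {A·x : x ∈ ℤ^n}, and for each j, ‖A·vj‖ ≤ (‖r‖ + 1)·‖vj‖, where ‖·‖ is the Euclidean norm. Consequently, for every k ≤ n − t, the k-th successive minimum of L(A) satisfies Λ_k(L(A)) ≤ (‖r‖ + 1)·Λ_k(N(P)), where N(P) = {x ∈ ℤ^n : pi·x = 0 for i = 1,…,t} is the kernel lattice of the matrix P with rows p1,…,pt. -/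

import Mathlib

open Finset

/-- Euclidean norm of an integer vector. -/
noncomputable def enorm {m : ℕ} (v : Fin m → ℤ) : ℝ :=
  Real.sqrt (∑ i, ((v i : ℝ)) ^ 2)

/-- The `k`-th successive minimum of a set (lattice) of integer vectors:
the infimum of those reals `s` such that the set contains `k` linearly
independent vectors each of Euclidean norm at most `s`. -/
noncomputable def succMin {m : ℕ} (L : Set (Fin m → ℤ)) (k : ℕ) : ℝ :=
  sInf {s : ℝ | ∃ w : Fin k → (Fin m → ℤ),
    (∀ j, w j ∈ L) ∧ LinearIndependent ℤ w ∧ ∀ j, _root_.enorm (w j) ≤ s}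

lemma enorm_nonneg' {m : ℕ} (v : Fin m → ℤ) : 0 ≤ _root_.enorm v := Real.sqrt_nonneg _

/-- Key single-vector norm bound. -/
lemma aux_norm_bound {n t : ℕ}
    (p : Fin t → Fin n → ℤ) (M : Fin t → ℤ) (r : Fin n → ℤ)
    (a : Fin n → ℤ) (ha : a = fun j => (∑ i, M i * p i j) + r j)
    (A : Matrix (Fin (n + 1)) (Fin n) ℤ)
    (hA0 : ∀ j, A 0 j = a j)
    (hAsucc : ∀ i : Fin n, ∀ j, A i.succ j = if i = j then 1 else 0)
    (w : Fin n → ℤ) (hw : ∀ i : Fin t, ∑ m, p i m * w m = 0) :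
    _root_.enorm (A.mulVec w) ≤ (_root_.enorm r + 1) * _root_.enorm w := by
  have hsucc : ∀ i : Fin n, A.mulVec w i.succ = w i := by
    intro i
    simp [Matrix.mulVec, dotProduct, hAsucc, ite_mul]
  have h0 : A.mulVec w 0 = ∑ j, r j * w j := by
    have h1 : A.mulVec w 0 = ∑ j, a j * w j := by
      simp [Matrix.mulVec, dotProduct, hA0]
    rw [h1, ha]
    have hz : ∑ j, (∑ i, M i * p i j) * w j = 0 := by
      simp only [Finset.sum_mul]
      rw [Finset.sum_comm]
      simp only [mul_assoc, ← Finset.mul_sum]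
      simp [hw]
    simp only [add_mul, Finset.sum_add_distrib, hz, zero_add]
  -- now the real estimate
  set S : ℝ := ∑ i, ((w i : ℝ)) ^ 2 with hS
  set T : ℝ := ∑ i, ((r i : ℝ)) ^ 2 with hT
  have hSnn : 0 ≤ S := Finset.sum_nonneg fun _ _ => sq_nonneg _
  have hTnn : 0 ≤ T := Finset.sum_nonneg fun _ _ => sq_nonneg _
  have hX : ((A.mulVec w 0 : ℤ) : ℝ) = ∑ j, ((r j : ℝ)) * ((w j : ℝ)) := by
    rw [h0]; push_cast; ring
  have hCS : (∑ j, ((r j : ℝ)) * ((w j : ℝ))) ^ 2 ≤ T * S :=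
    Finset.sum_mul_sq_le_sq_mul_sq _ _ _
  have hsum : ∑ i, ((A.mulVec w i : ℤ) : ℝ) ^ 2
      = ((A.mulVec w 0 : ℤ) : ℝ) ^ 2 + S := by
    rw [Fin.sum_univ_succ]
    congr 1
    apply Finset.sum_congr rfl
    intro i _
    rw [hsucc]
  have hR : _root_.enorm r = Real.sqrt T := rfl
  have hV : _root_.enorm w = Real.sqrt S := rfl
  have hRsq : Real.sqrt T ^ 2 = T := Real.sq_sqrt hTnn
  have hVsq : Real.sqrt S ^ 2 = S := Real.sq_sqrt hSnn
  have hRnn : (0:ℝ) ≤ Real.sqrt T := Real.sqrt_nonneg _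
  have hVnn : (0:ℝ) ≤ Real.sqrt S := Real.sqrt_nonneg _
  have key : ((A.mulVec w 0 : ℤ) : ℝ) ^ 2 + S ≤ ((Real.sqrt T + 1) * Real.sqrt S) ^ 2 := by
    have h2 : ((A.mulVec w 0 : ℤ) : ℝ) ^ 2 ≤ T * S := by rw [hX]; exact hCS
    nlinarith [mul_nonneg hRnn hVnn]
  calc _root_.enorm (A.mulVec w) = Real.sqrt (((A.mulVec w 0 : ℤ) : ℝ) ^ 2 + S) := by
        rw [_root_.enorm, hsum]
    _ ≤ Real.sqrt (((Real.sqrt T + 1) * Real.sqrt S) ^ 2) := Real.sqrt_le_sqrt key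
    _ = (Real.sqrt T + 1) * Real.sqrt S := by
        rw [Real.sqrt_sq (by positivity)]
    _ = (_root_.enorm r + 1) * _root_.enorm w := by rw [hR, hV]

lemma aux_ker_bot {n : ℕ} (A : Matrix (Fin (n + 1)) (Fin n) ℤ)
    (hAsucc : ∀ i : Fin n, ∀ j, A i.succ j = if i = j then 1 else 0) :
    LinearMap.ker A.mulVecLin = ⊥ := by
  rw [LinearMap.ker_eq_bot']
  intro x hx
  funext i
  have h := congrFun hx i.succ
  simpa [Matrix.mulVecLin_apply, Matrix.mulVec, dotProduct, hAsucc, ite_mul] using h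

lemma aux_exists_kernel {n t : ℕ} (p : Fin t → Fin n → ℤ) (k' : ℕ) (hk' : k' ≤ n - t) :
    ∃ x : Fin k' → (Fin n → ℤ),
      (∀ j, ∀ i : Fin t, ∑ m, p i m * x j m = 0) ∧ LinearIndependent ℤ x := by
  classical
  set pq : Matrix (Fin t) (Fin n) ℚ := fun i j => (p i j : ℚ) with hpq
  set f := pq.mulVecLin with hf
  set W := LinearMap.ker f with hW
  have hrank : Module.finrank ℚ (LinearMap.range f) + Module.finrank ℚ W
      = Module.finrank ℚ (Fin n → ℚ) := LinearMap.finrank_range_add_finrank_ker f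
  have hrange : Module.finrank ℚ (LinearMap.range f) ≤ t := by
    have := Submodule.finrank_le (LinearMap.range f)
    simpa [Module.finrank_pi] using this
  have hWrank : n - t ≤ Module.finrank ℚ W := by
    have hn' : Module.finrank ℚ (Fin n → ℚ) = n := by simp [Module.finrank_pi]
    omega
  have hkle : k' ≤ Module.finrank ℚ W := le_trans hk' hWrank
  let b := Module.finBasis ℚ W
  let u : Fin k' → (Fin n → ℚ) := fun j => (b (Fin.castLE hkle j) : Fin n → ℚ)
  have huli : LinearIndependent ℚ u := by
    have h1 : LinearIndependent ℚ (fun j : Fin k' => b (Fin.castLE hkle j)) :=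
      b.linearIndependent.comp _ (Fin.castLE_injective hkle)
    exact h1.map' W.subtype W.ker_subtype
  have humem : ∀ j, f (u j) = 0 := fun j => (b (Fin.castLE hkle j)).2
  have huker : ∀ j, ∀ i : Fin t, ∑ m, (p i m : ℚ) * u j m = 0 := by
    intro j i
    have := congrFun (humem j) i
    exact this
  set d : Fin k' → ℤ := fun j => ∏ m, ((u j m).den : ℤ) with hd
  have hdpos : ∀ j, 0 < d j := by
    intro j
    apply Finset.prod_pos
    intro m _
    exact_mod_cast (u j m).pos
  set x : Fin k' → (Fin n → ℤ) := fun j m => (u j m * (d j : ℚ)).num with hx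
  have hxq : ∀ j m, ((x j m : ℤ) : ℚ) = u j m * (d j : ℚ) := by
    intro j m
    obtain ⟨e, he⟩ : ((u j m).den : ℤ) ∣ d j :=
      Finset.dvd_prod_of_mem (fun m' => (((u j m').den : ℤ))) (Finset.mem_univ m)
    have hden : ((u j m).den : ℚ) ≠ 0 := by
      exact_mod_cast (u j m).den_ne_zero
    have hmd : u j m * ((u j m).den : ℚ) = ((u j m).num : ℚ) := by
      rw [Rat.mul_den_eq_num]
    have h2 : u j m * (d j : ℚ) = (((u j m).num * e : ℤ) : ℚ) := by
      rw [he]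
      push_cast
      rw [← mul_assoc, hmd]
    rw [hx]
    show (((u j m * (d j : ℚ)).num : ℤ) : ℚ) = _
    rw [h2, Rat.num_intCast]
  have hxker : ∀ j, ∀ i : Fin t, ∑ m, p i m * x j m = 0 := by
    intro j i
    have hq : ((∑ m, p i m * x j m : ℤ) : ℚ) = 0 := by
      push_cast [hxq]
      calc ∑ m, (p i m : ℚ) * (u j m * (d j : ℚ))
          = (∑ m, (p i m : ℚ) * u j m) * (d j : ℚ) := by
            rw [Finset.sum_mul]; apply Finset.sum_congr rfl; intro m _; ring
        _ = 0 := by rw [huker j i, zero_mul]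
    exact_mod_cast hq
  have hxli : LinearIndependent ℤ x := by
    rw [Fintype.linearIndependent_iff]
    intro c hc j
    have hcq : ∑ j', ((c j' : ℚ) * (d j' : ℚ)) • u j' = 0 := by
      funext m
      have hm := congrFun hc m
      have hm' : ∑ j', c j' * x j' m = 0 := by
        simpa [Finset.sum_apply] using hm
      have : ((∑ j', c j' * x j' m : ℤ) : ℚ) = 0 := by exact_mod_cast hm'
      push_cast [hxq] at this
      simpa [Finset.sum_apply, smul_eq_mul, mul_assoc, mul_comm, mul_left_comm] using this
    have := Fintype.linearIndependent_iff.mp huli _ hcq j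
    have hdj : ((d j : ℚ)) ≠ 0 := by
      exact_mod_cast (hdpos j).ne'
    have hcj : (c j : ℚ) = 0 := by
      rcases mul_eq_zero.mp this with h | h
      · exact h
      · exact absurd h hdj
    exact_mod_cast hcj
  exact ⟨x, hxker, hxli⟩

theorem ckp_kernel_lattice_succ_min (n t : ℕ) (hn : 0 < n) (ht : 0 < t) (htn : t ≤ n)
    (p : Fin t → Fin n → ℤ) (M : Fin t → ℤ) (r : Fin n → ℤ)
    (a : Fin n → ℤ) (ha : a = fun j => (∑ i, M i * p i j) + r j)
    (A : Matrix (Fin (n + 1)) (Fin n) ℤ)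
    (hA0 : ∀ j, A 0 j = a j)
    (hAsucc : ∀ i : Fin n, ∀ j, A i.succ j = if i = j then 1 else 0)
    (k : ℕ) (v : Fin k → (Fin n → ℤ))
    (hvli : LinearIndependent ℤ v)
    (hvker : ∀ (i : Fin t) (j : Fin k), ∑ m, p i m * v j m = 0) :
    (LinearIndependent ℤ (fun j => A.mulVec (v j)) ∧
      (∀ j, A.mulVec (v j) ∈ {y : Fin (n + 1) → ℤ | ∃ x : Fin n → ℤ, y = A.mulVec x}) ∧
      (∀ j, _root_.enorm (A.mulVec (v j)) ≤ (_root_.enorm r + 1) * _root_.enorm (v j))) ∧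
    ∀ k' : ℕ, 1 ≤ k' → k' ≤ n - t →
      succMin {y : Fin (n + 1) → ℤ | ∃ x : Fin n → ℤ, y = A.mulVec x} k' ≤
        (_root_.enorm r + 1) * succMin {x : Fin n → ℤ | ∀ i : Fin t, ∑ m, p i m * x m = 0} k' := by
  classical
  have hinj := aux_ker_bot A hAsucc
  have hli : LinearIndependent ℤ (fun j => A.mulVec (v j)) := by
    have := hvli.map' A.mulVecLin hinj
    exact this
  refine ⟨⟨hli, fun j => ⟨v j, rfl⟩,
      fun j => aux_norm_bound p M r a ha A hA0 hAsucc (v j) (fun i => hvker i j)⟩, ?_⟩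
  intro k' hk1 hk2
  haveI : Nonempty (Fin k') := ⟨⟨0, hk1⟩⟩
  have hrnn : 0 ≤ _root_.enorm r := enorm_nonneg' r
  have hc : (0:ℝ) < _root_.enorm r + 1 := by linarith
  set S1 := {s : ℝ | ∃ w : Fin k' → (Fin (n+1) → ℤ),
    (∀ j, w j ∈ {y : Fin (n + 1) → ℤ | ∃ x : Fin n → ℤ, y = A.mulVec x}) ∧
    LinearIndependent ℤ w ∧ ∀ j, _root_.enorm (w j) ≤ s} with hS1
  set S2 := {s : ℝ | ∃ w : Fin k' → (Fin n → ℤ),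
    (∀ j, w j ∈ {x : Fin n → ℤ | ∀ i : Fin t, ∑ m, p i m * x m = 0}) ∧
    LinearIndependent ℤ w ∧ ∀ j, _root_.enorm (w j) ≤ s} with hS2
  obtain ⟨x, hxker, hxli⟩ := aux_exists_kernel p k' hk2
  have hS2ne : S2.Nonempty := by
    refine ⟨Finset.univ.sup' Finset.univ_nonempty (fun j => _root_.enorm (x j)), x, ?_, hxli, ?_⟩
    · intro j; exact hxker j
    · intro j; exact Finset.le_sup' (fun j => _root_.enorm (x j)) (Finset.mem_univ j)
  have hbdd : BddBelow S1 := by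
    refine ⟨0, ?_⟩
    rintro s ⟨w, -, -, hnorm⟩
    exact le_trans (enorm_nonneg' (w ⟨0, hk1⟩)) (hnorm _)
  have hmap : ∀ s ∈ S2, (_root_.enorm r + 1) * s ∈ S1 := by
    rintro s ⟨w, hwmem, hwli, hwnorm⟩
    refine ⟨fun j => A.mulVec (w j), fun j => ⟨w j, rfl⟩, ?_, ?_⟩
    · have := hwli.map' A.mulVecLin hinj
      exact this
    · intro j
      calc _root_.enorm (A.mulVec (w j)) ≤ (_root_.enorm r + 1) * _root_.enorm (w j) :=
            aux_norm_bound p M r a ha A hA0 hAsucc (w j) (hwmem j)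
        _ ≤ (_root_.enorm r + 1) * s := by
            exact mul_le_mul_of_nonneg_left (hwnorm j) hc.le
  have key : ∀ s ∈ S2, sInf S1 ≤ (_root_.enorm r + 1) * s :=
    fun s hs => csInf_le hbdd (hmap s hs)
  have hdiv : sInf S1 / (_root_.enorm r + 1) ≤ sInf S2 := by
    apply le_csInf hS2ne
    intro s hs
    rw [div_le_iff₀ hc]
    have := key s hs
    linarith
  have hfinal : sInf S1 ≤ (_root_.enorm r + 1) * sInf S2 := by
    rw [div_le_iff₀ hc] at hdiv
    linarith
  exact hfinal
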